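/- Let d̃ be a real-valued function on (x_L, x_R) and set D̃ = diag(d̃(x_1), …, d̃(x_M)). If either d̃ is convex and d̃ ≥ 0 on (x_L,x_R), or d̃ is concave and d̃ ≤ 0 on (x_L,x_R), then for every u ∈ ℝ^M: uᵀ D̃ G D̃ u ≤ 2 · (max_{1≤i≤M} |d̃(x_i)|²) · uᵀ G u. -/

import Mathlib

open Matrix

/-- The Grünwald–Letnikov coefficients `g_k^{(α)}`. -/
noncomputable def gcoef (α : ℝ) : ℕ → ℝ
  | 0 => 1
  | (k+1) => (1 - (α + 1) / (k + 1 : ℕ)) * gcoef α k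

/-- The WSGD coefficients `w_k^{(α)}`. -/
noncomputable def wcoef (α : ℝ) : ℕ → ℝ
  | 0 => α / 2 * gcoef α 0
  | (k+1) => α / 2 * gcoef α (k+1) + (2 - α) / 2 * gcoef α k

/-- The `M × M` lower-Hessenberg Toeplitz matrix `G_α`. -/
noncomputable def Gmat (α : ℝ) (M : ℕ) : Matrix (Fin M) (Fin M) ℝ :=
  Matrix.of fun i j => if (j : ℕ) ≤ (i : ℕ) + 1 then wcoef α ((i : ℕ) + 1 - (j : ℕ)) else 0

noncomputable def Tsum (α : ℝ) (n : ℕ) : ℝ := ∑ k ∈ Finset.range (n+1), gcoef α k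
noncomputable def acoef (α : ℝ) (m : ℕ) : ℝ :=
  if m = 1 then wcoef α 0 + wcoef α 2 else wcoef α (m+1)
noncomputable def Asum (α : ℝ) (N : ℕ) : ℝ := ∑ k ∈ Finset.range N, acoef α (k+1)
noncomputable def Ssum (α : ℝ) (n : ℕ) : ℝ := ∑ k ∈ Finset.range (n+1), wcoef α k

section coeffs
variable {α : ℝ} (hα1 : 1 < α) (hα2 : α < 2)

lemma g0 : gcoef α 0 = 1 := rfl
lemma g1 : gcoef α 1 = -α := by
  show (1 - (α + 1) / ((0:ℕ) + 1 : ℕ)) * gcoef α 0 = -α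
  rw [g0]; norm_num

lemma g2 : gcoef α 2 = α * (α - 1) / 2 := by
  show (1 - (α + 1) / ((1:ℕ) + 1 : ℕ)) * gcoef α 1 = _
  rw [g1]; push_cast; ring

include hα1 hα2 in
lemma gpos : ∀ k, 0 ≤ gcoef α (k+2) := by
  intro k
  induction k with
  | zero => rw [g2]; nlinarith
  | succ n ih =>
      show 0 ≤ (1 - (α + 1) / ((n + 2 : ℕ) + 1 : ℕ)) * gcoef α (n+2)
      apply mul_nonneg _ ih
      have h3 : (3:ℝ) ≤ ((n + 2 : ℕ) + 1 : ℕ) := by push_cast; linarith [Nat.cast_nonneg (α := ℝ) n]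
      have hpos : (0:ℝ) < ((n + 2 : ℕ) + 1 : ℕ) := by linarith
      rw [sub_nonneg, div_le_one hpos]; linarith

lemma gT : ∀ n : ℕ, ((n:ℝ)+1) * gcoef α (n+1) = -α * Tsum α n := by
  intro n
  induction n with
  | zero => rw [g1]; simp [Tsum, g0]
  | succ n ih =>
      have hne : ((n:ℝ) + 1 + 1) ≠ 0 := by positivity
      have hstep : gcoef α (n+2) = (1 - (α + 1) / ((n+1 : ℕ) + 1 : ℕ)) * gcoef α (n+1) := rfl
      have hT : Tsum α (n+1) = Tsum α n + gcoef α (n+1) := by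
        simp [Tsum, Finset.sum_range_succ]
      rw [hT, hstep]
      push_cast
      field_simp
      nlinarith [ih]

include hα1 hα2 in
lemma Tnonpos : ∀ n, Tsum α (n+1) ≤ 0 := by
  intro n
  induction n with
  | zero => simp [Tsum, Finset.sum_range_succ, g0, g1]; linarith
  | succ n ih =>
      have hT : Tsum α (n+2) = Tsum α (n+1) + gcoef α (n+2) := by
        simp [Tsum, Finset.sum_range_succ]
      have hg := gT (α := α) (n+1)
      have hpos : (0:ℝ) < (n:ℝ) + 1 + 1 := by positivity
      have : ((n:ℝ)+1+1) * Tsum α (n+2) = ((n:ℝ)+1+1 - α) * Tsum α (n+1) := by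
        rw [hT]; push_cast at hg ⊢; nlinarith [hg]
      nlinarith [this, ih]

lemma w0 : wcoef α 0 = α / 2 := by simp [wcoef, g0]
lemma w1 : wcoef α 1 = α / 2 * (-α) + (2 - α) / 2 := by
  show α / 2 * gcoef α 1 + (2 - α) / 2 * gcoef α 0 = _
  rw [g1, g0]; ring

include hα1 in
lemma w1nonpos : wcoef α 1 ≤ 0 := by rw [w1]; nlinarith

include hα1 hα2 in
lemma wpos : ∀ k, 0 ≤ wcoef α (k+3) := by
  intro k
  show 0 ≤ α / 2 * gcoef α (k+3) + (2 - α) / 2 * gcoef α (k+2)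
  have h1 := gpos hα1 hα2 (k+1)
  have h2 := gpos hα1 hα2 k
  have : gcoef α (k+1+2) = gcoef α (k+3) := by norm_num
  nlinarith [h1, h2]

include hα1 hα2 in
lemma apos : ∀ k, 0 ≤ acoef α (k+1) := by
  intro k
  cases k with
  | zero =>
      have ha : acoef α 1 = wcoef α 0 + wcoef α 2 := by simp [acoef]
      have hw2 : wcoef α 2 = α / 2 * gcoef α 2 + (2 - α) / 2 * gcoef α 1 := rfl
      rw [ha, hw2, w0, g2, g1]
      have h1 : (0:ℝ) < α * (α + 2) * (α - 1) := by
        apply mul_pos (mul_pos (by linarith) (by linarith)) (by linarith)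
      nlinarith [h1]
  | succ n =>
      have : acoef α (n+2) = wcoef α (n+3) := by simp [acoef]
      rw [this]; exact wpos hα1 hα2 n

lemma STrel : ∀ n, Ssum α (n+1) = α/2 * Tsum α (n+1) + (2-α)/2 * Tsum α n := by
  intro n
  induction n with
  | zero =>
      simp [Ssum, Tsum, Finset.sum_range_succ, w0, w1, g0, g1]; ring
  | succ n ih =>
      have h1 : Ssum α (n+2) = Ssum α (n+1) + wcoef α (n+2) := by
        simp [Ssum, Finset.sum_range_succ]
      have h2 : Tsum α (n+2) = Tsum α (n+1) + gcoef α (n+2) := by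
        simp [Tsum, Finset.sum_range_succ]
      have h3 : wcoef α (n+2) = α / 2 * gcoef α (n+2) + (2 - α) / 2 * gcoef α (n+1) := rfl
      have h4 : Tsum α (n+1) = Tsum α n + gcoef α (n+1) := by
        simp [Tsum, Finset.sum_range_succ]
      rw [h1, h2, h3, ih, h4]; ring

lemma AS : ∀ N, Asum α (N+1) = Ssum α (N+2) - wcoef α 1 := by
  intro N
  induction N with
  | zero =>
      simp [Asum, Ssum, acoef, Finset.sum_range_succ]
      ring
  | succ n ih =>
      have h1 : Asum α (n+2) = Asum α (n+1) + acoef α (n+2) := by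
        simp [Asum, Finset.sum_range_succ]
      have h2 : Ssum α (n+3) = Ssum α (n+2) + wcoef α (n+3) := by
        simp [Ssum, Finset.sum_range_succ]
      have h3 : acoef α (n+2) = wcoef α (n+3) := by simp [acoef]
      rw [h1, h3, ih, h2]; ring

include hα1 hα2 in
lemma Abound : ∀ N, Asum α N ≤ -wcoef α 1 := by
  intro N
  cases N with
  | zero =>
      simp [Asum]
      linarith [w1nonpos (α := α) hα1]
  | succ n =>
      rw [AS]
      have hS : Ssum α (n+2) ≤ 0 := by
        rw [STrel]
        have h1 := Tnonpos hα1 hα2 (n+1)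
        have h2 := Tnonpos hα1 hα2 n
        nlinarith
      linarith

end coeffs


lemma helper (w1 c dm : ℝ) (a : ℕ → ℝ) (L R : ℕ) (hLR : L ≤ R)
    (ha : ∀ k, 0 ≤ a (k+1))
    (hA : ∀ N, (∑ k ∈ Finset.range N, a (k+1)) ≤ -w1)
    (hc : 0 ≤ c) (hdm : 0 ≤ dm) (hdm2 : dm^2 ≤ c)
    (dl dr : ℕ → ℝ)
    (hdl : ∀ k < L, 0 ≤ dl k) (hdr : ∀ k < R, 0 ≤ dr k)
    (hconv : ∀ k < L, 2*dm ≤ dl k + dr k) :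
    0 ≤ (2*c - dm^2) * (-(2*w1)) + (∑ k ∈ Finset.range L, (-(a (k+1))) * (2*c - dm * dl k))
      + (∑ k ∈ Finset.range R, (-(a (k+1))) * (2*c - dm * dr k)) := by
  set AL := ∑ k ∈ Finset.range L, a (k+1) with hAL
  set AR := ∑ k ∈ Finset.range R, a (k+1) with hAR
  have hALnn : 0 ≤ AL := Finset.sum_nonneg fun k _ => ha k
  have hsplit : ∀ f : ℕ → ℝ, (∑ k ∈ Finset.range R, f k)
      = (∑ k ∈ Finset.range L, f k) + ∑ k ∈ Finset.Ico L R, f k := by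
    intro f
    simp only [Finset.range_eq_Ico]
    exact (Finset.sum_Ico_consecutive f (Nat.zero_le L) hLR).symm
  have hALR : AL ≤ AR := by
    rw [hAR, hsplit]
    have : 0 ≤ ∑ k ∈ Finset.Ico L R, a (k+1) := Finset.sum_nonneg fun k _ => ha k
    linarith
  -- paired part
  have hpair : -(2*(2*c - dm^2)) * AL ≤
      (∑ k ∈ Finset.range L, (-(a (k+1))) * (2*c - dm * dl k))
      + (∑ k ∈ Finset.range L, (-(a (k+1))) * (2*c - dm * dr k)) := by
    rw [hAL, ← Finset.sum_add_distrib, Finset.mul_sum]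
    apply Finset.sum_le_sum
    intro k hk
    have hkL := Finset.mem_range.1 hk
    have h1 := ha k
    have h2 := hconv k hkL
    nlinarith [mul_nonneg h1 (mul_nonneg hdm (by linarith : (0:ℝ) ≤ dl k + dr k - 2*dm))]
  -- tail part
  have htail : -(2*c) * (AR - AL) ≤ ∑ k ∈ Finset.Ico L R, (-(a (k+1))) * (2*c - dm * dr k) := by
    have h1 : AR - AL = ∑ k ∈ Finset.Ico L R, a (k+1) := by
      rw [hAR, hsplit]; ring
    rw [h1, Finset.mul_sum]
    apply Finset.sum_le_sum
    intro k hk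
    have hkR : k < R := (Finset.mem_Ico.1 hk).2
    have h2 := ha k
    have h3 : 0 ≤ dm * dr k := mul_nonneg hdm (hdr k hkR)
    nlinarith
  have hsum : (∑ k ∈ Finset.range R, (-(a (k+1))) * (2*c - dm * dr k))
      = (∑ k ∈ Finset.range L, (-(a (k+1))) * (2*c - dm * dr k))
        + ∑ k ∈ Finset.Ico L R, (-(a (k+1))) * (2*c - dm * dr k) := hsplit _
  have hAL' := hA L
  have hAR' := hA R
  rw [hsum]
  nlinarith [hpair, htail, hALnn, hALR, hAL', hAR', hc, hdm2]

noncomputable def GN (α : ℝ) (i j : ℕ) : ℝ :=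
  -(if j ≤ i+1 then wcoef α (i+1-j) else 0) - (if i ≤ j+1 then wcoef α (j+1-i) else 0)

lemma Gent (α : ℝ) (M : ℕ) (i j : Fin M) :
    (-(Gmat α M) - (Gmat α M)ᵀ) i j = GN α (i : ℕ) (j : ℕ) := by
  simp [Gmat, GN, Matrix.sub_apply, Matrix.neg_apply, Matrix.transpose_apply]

lemma GNdiag (α : ℝ) (i : ℕ) : GN α i i = -(2 * wcoef α 1) := by
  have h1 : i + 1 - i = 1 := by omega
  simp [GN, h1]; ring

lemma GNe (α : ℝ) (i j : ℕ) (h1 : j ≤ i+1) (h2 : i ≤ j+1) :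
    GN α i j = -(wcoef α (i+1-j)) - wcoef α (j+1-i) := by
  simp only [GN, if_pos h1, if_pos h2]

lemma GNe1 (α : ℝ) (i j : ℕ) (h1 : j ≤ i+1) (h2 : ¬ i ≤ j+1) :
    GN α i j = -(wcoef α (i+1-j)) := by
  simp only [GN, if_pos h1, if_neg h2]; ring

lemma GNe2 (α : ℝ) (i j : ℕ) (h1 : ¬ j ≤ i+1) (h2 : i ≤ j+1) :
    GN α i j = -(wcoef α (j+1-i)) := by
  simp only [GN, if_neg h1, if_pos h2]; ring

lemma GNleft (α : ℝ) (i k : ℕ) (hk : k < i) : GN α i (i-1-k) = -(acoef α (k+1)) := by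
  have hj1 : i - 1 - k ≤ i + 1 := by omega
  have hj2 : i + 1 - (i - 1 - k) = k + 2 := by omega
  rcases Nat.eq_zero_or_pos k with hk0 | hk0
  · subst hk0
    have hj3 : i ≤ (i - 1 - 0) + 1 := by omega
    have hj4 : (i - 1 - 0) + 1 - i = 0 := by omega
    rw [GNe α i _ hj1 hj3, hj2, hj4]
    simp [acoef]; ring
  · have hj3 : ¬ (i ≤ (i - 1 - k) + 1) := by omega
    have hk1 : k + 1 ≠ 1 := by omega
    rw [GNe1 α i _ hj1 hj3, hj2]
    simp [acoef, hk1, show k ≠ 0 by omega]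

lemma GNright (α : ℝ) (i k : ℕ) : GN α i (i+1+k) = -(acoef α (k+1)) := by
  have hj3 : i ≤ (i + 1 + k) + 1 := by omega
  have hj4 : (i + 1 + k) + 1 - i = k + 2 := by omega
  rcases Nat.eq_zero_or_pos k with hk0 | hk0
  · subst hk0
    have hj1 : i + 1 + 0 ≤ i + 1 := by omega
    have hj2 : i + 1 - (i + 1 + 0) = 0 := by omega
    rw [GNe α i _ hj1 hj3, hj2, hj4]
    simp [acoef]; ring
  · have hj1 : ¬ (i + 1 + k ≤ i + 1) := by omega
    have hk1 : k + 1 ≠ 1 := by omega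
    rw [GNe2 α i _ hj1 hj3, hj4]
    simp [acoef, hk1, show k ≠ 0 by omega]

lemma GNsymm (α : ℝ) (i j : ℕ) : GN α i j = GN α j i := by
  simp only [GN]; ring

lemma rowsum {α : ℝ} (hα1 : 1 < α) (hα2 : α < 2) {M : ℕ} (i : Fin M)
    (c : ℝ) (d : ℕ → ℝ) (hc : 0 ≤ c)
    (hd0 : ∀ j, j < M → 0 ≤ d j) (hd2 : ∀ j, j < M → d j ^ 2 ≤ c)
    (hconv : ∀ k, k < (i:ℕ) → (i:ℕ) + 1 + k < M →
      2 * d i ≤ d ((i:ℕ) - 1 - k) + d ((i:ℕ) + 1 + k)) :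
    0 ≤ ∑ j : Fin M, (2 * c - d i * d j) * GN α i j := by
  set I := (i : ℕ) with hI
  have hIM : I < M := i.2
  set F : ℕ → ℝ := fun j => (2 * c - d I * d j) * GN α I j with hF
  have h0 : (∑ j : Fin M, (2 * c - d i * d j) * GN α i j) = ∑ j ∈ Finset.range M, F j := by
    rw [← Fin.sum_univ_eq_sum_range]
  rw [h0]
  have hsplit1 : (∑ j ∈ Finset.range M, F j)
      = (∑ j ∈ Finset.range (I+1), F j) + ∑ j ∈ Finset.Ico (I+1) M, F j := by
    simp only [Finset.range_eq_Ico]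
    exact (Finset.sum_Ico_consecutive F (Nat.zero_le _) hIM).symm
  rw [hsplit1, Finset.sum_range_succ]
  have hleft : (∑ j ∈ Finset.range I, F j)
      = ∑ k ∈ Finset.range I, (-(acoef α (k+1))) * (2 * c - d I * d (I - 1 - k)) := by
    rw [← Finset.sum_range_reflect F I]
    apply Finset.sum_congr rfl
    intro k hk
    have hkI : k < I := Finset.mem_range.1 hk
    show (2 * c - d I * d (I - 1 - k)) * GN α I (I - 1 - k) = _
    rw [GNleft α I k hkI]; ring
  set R := M - (I + 1) with hR
  have hright : (∑ j ∈ Finset.Ico (I+1) M, F j)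
      = ∑ k ∈ Finset.range R, (-(acoef α (k+1))) * (2 * c - d I * d (I + 1 + k)) := by
    rw [Finset.sum_Ico_eq_sum_range]
    apply Finset.sum_congr rfl
    intro k hk
    show (2 * c - d I * d (I + 1 + k)) * GN α I (I + 1 + k) = _
    rw [GNright α I k]; ring
  have hdiag : F I = (2 * c - d I ^ 2) * (-(2 * wcoef α 1)) := by
    show (2 * c - d I * d I) * GN α I I = _
    rw [GNdiag]; ring
  rw [hleft, hright, hdiag]
  have ha : ∀ k, 0 ≤ acoef α (k+1) := apos hα1 hα2
  have hA : ∀ N, (∑ k ∈ Finset.range N, acoef α (k+1)) ≤ -(wcoef α 1) := fun N => Abound hα1 hα2 N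
  have hdm : 0 ≤ d I := hd0 I hIM
  have hdm2 : d I ^ 2 ≤ c := hd2 I hIM
  rcases le_total I R with hLR | hLR
  · have := helper (wcoef α 1) c (d I) (acoef α) I R hLR ha hA hc hdm hdm2
      (fun k => d (I - 1 - k)) (fun k => d (I + 1 + k))
      (fun k hk => hd0 _ (by omega)) (fun k hk => hd0 _ (by omega))
      (fun k hk => hconv k hk (by omega))
    linarith [this]
  · have := helper (wcoef α 1) c (d I) (acoef α) R I hLR ha hA hc hdm hdm2
      (fun k => d (I + 1 + k)) (fun k => d (I - 1 - k))
      (fun k hk => hd0 _ (by omega)) (fun k hk => hd0 _ (by omega))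
      (fun k hk => by
        have h2 := hconv k (by omega) (by omega)
        linarith)
    linarith [this]

lemma quadform {n : ℕ} (E : Fin n → Fin n → ℝ) (u : Fin n → ℝ)
    (hsym : ∀ i j, E i j = E j i) (hoff : ∀ i j, i ≠ j → E i j ≤ 0)
    (hrow : ∀ i, 0 ≤ ∑ j, E i j) :
    0 ≤ ∑ i, ∑ j, E i j * (u i * u j) := by
  have key : (∑ i, ∑ j, E i j * (u i * u j))
      = (∑ i, (∑ j, E i j) * u i ^ 2) - (∑ i, ∑ j, E i j * (u i - u j) ^ 2) / 2 := by
    have h1 : ∀ i j : Fin n, E i j * (u i * u j)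
        = (E i j * u i ^ 2 + E i j * u j ^ 2 - E i j * (u i - u j) ^ 2) / 2 := by
      intros; ring
    have h2 : (∑ i, ∑ j, E i j * u j ^ 2) = ∑ i, ∑ j, E i j * u i ^ 2 := by
      rw [Finset.sum_comm]
      apply Finset.sum_congr rfl; intro i _
      apply Finset.sum_congr rfl; intro j _
      rw [hsym]
    simp only [h1]
    simp only [← Finset.sum_div]
    simp only [Finset.sum_sub_distrib, Finset.sum_add_distrib]
    rw [h2]
    have h3 : ∀ i : Fin n, (∑ j, E i j * u i ^ 2) = (∑ j, E i j) * u i ^ 2 := by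
      intro i; rw [Finset.sum_mul]
    simp only [h3]
    ring
  rw [key]
  have hp1 : 0 ≤ ∑ i, (∑ j, E i j) * u i ^ 2 :=
    Finset.sum_nonneg fun i _ => mul_nonneg (hrow i) (sq_nonneg _)
  have hp2 : (∑ i, ∑ j, E i j * (u i - u j) ^ 2) ≤ 0 := by
    apply Finset.sum_nonpos
    intro i _
    apply Finset.sum_nonpos
    intro j _
    rcases eq_or_ne i j with rfl | hne
    · simp
    · exact mul_nonpos_of_nonpos_of_nonneg (hoff i j hne) (sq_nonneg _)
  linarith

lemma GNoff {α : ℝ} (hα1 : 1 < α) (hα2 : α < 2) (i j : ℕ) (hne : i ≠ j) :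
    GN α i j ≤ 0 := by
  rcases lt_or_gt_of_ne hne with hlt | hlt
  · have hj : j = i + 1 + (j - i - 1) := by omega
    rw [hj, GNright]
    linarith [apos hα1 hα2 (j - i - 1)]
  · have hkk : i - 1 - (i - 1 - j) = j := by omega
    rw [← hkk, GNleft α i (i - 1 - j) (by omega)]
    linarith [apos hα1 hα2 (i - 1 - j)]


/-- If `d̃` is convex and nonnegative on `(x_L,x_R)`, or concave and nonpositive there, then
`uᵀ D̃ G D̃ u ≤ 2 (max_i |d̃(x_i)|²) uᵀ G u` where `G = -G_α - G_αᵀ`,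
`D̃ = diag(d̃(x_1),…,d̃(x_M))` and `x_i = x_L + i h`, `h = (x_R - x_L)/(M+1)`. -/
theorem diag_G_diag_bound (α : ℝ) (hα : α ∈ Set.Ioo (1 : ℝ) 2)
    (xL xR : ℝ) (hx : xL < xR) (M : ℕ) (hM : 0 < M) (dt : ℝ → ℝ)
    (hd : (ConvexOn ℝ (Set.Ioo xL xR) dt ∧ ∀ x ∈ Set.Ioo xL xR, 0 ≤ dt x) ∨
          (ConcaveOn ℝ (Set.Ioo xL xR) dt ∧ ∀ x ∈ Set.Ioo xL xR, dt x ≤ 0))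
    (u : Fin M → ℝ) :
    let h := (xR - xL) / (M + 1)
    let X : Fin M → ℝ := fun i => xL + ((i : ℕ) + 1) * h
    let Dt : Matrix (Fin M) (Fin M) ℝ := Matrix.diagonal fun i => dt (X i)
    let G : Matrix (Fin M) (Fin M) ℝ := -(Gmat α M) - (Gmat α M)ᵀ
    u ⬝ᵥ ((Dt * G * Dt) *ᵥ u) ≤
      2 * (Finset.univ.sup' ⟨⟨0, hM⟩, Finset.mem_univ _⟩ fun i => |dt (X i)| ^ 2) *
        (u ⬝ᵥ (G *ᵥ u)) := by
  obtain ⟨hα1, hα2⟩ := hα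
  intro h X Dt G
  set c := Finset.univ.sup' ⟨⟨0, hM⟩, Finset.mem_univ _⟩ fun i : Fin M => |dt (X i)| ^ 2
    with hcdef
  have hh : 0 < h := by
    apply div_pos (by linarith)
    positivity
  set dN : ℕ → ℝ := fun j => dt (xL + ((j : ℝ) + 1) * h) with hdN
  have hmem : ∀ j : ℕ, j < M → (xL + ((j : ℝ) + 1) * h) ∈ Set.Ioo xL xR := by
    intro j hj
    constructor
    · nlinarith [Nat.cast_nonneg (α := ℝ) j]
    · have h1 : ((j : ℝ) + 1) < (M : ℝ) + 1 := by
        have : (j : ℝ) < (M : ℝ) := by exact_mod_cast hj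
        linarith
      have h2 : ((M : ℝ) + 1) * h = xR - xL := by
        rw [show h = (xR - xL) / (↑M + 1) from rfl]
        field_simp
      nlinarith
  have hc2 : ∀ j : ℕ, j < M → dN j ^ 2 ≤ c := by
    intro j hj
    have := Finset.le_sup' (fun i : Fin M => |dt (X i)| ^ 2) (Finset.mem_univ ⟨j, hj⟩)
    rw [← hcdef] at this
    calc dN j ^ 2 = |dt (X ⟨j, hj⟩)| ^ 2 := by rw [sq_abs]
    _ ≤ c := this
  have hc0 : 0 ≤ c := le_trans (sq_nonneg _) (hc2 0 hM)
  -- sign-normalized diffusion values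
  obtain ⟨dd, hprod, hdd0, hmid⟩ :
      ∃ dd : ℕ → ℝ, (∀ a b : ℕ, dN a * dN b = dd a * dd b) ∧
        (∀ j, j < M → 0 ≤ dd j) ∧
        (∀ (i : Fin M) (k : ℕ), k < (i : ℕ) → (i : ℕ) + 1 + k < M →
          2 * dd i ≤ dd ((i : ℕ) - 1 - k) + dd ((i : ℕ) + 1 + k)) := by
    have hpt : ∀ (i : Fin M) (k : ℕ), k < (i : ℕ) → (i : ℕ) + 1 + k < M →
        (1/2 : ℝ) • (xL + (((i : ℕ) - 1 - k : ℕ) + 1 : ℝ) * h)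
          + (1/2 : ℝ) • (xL + (((i : ℕ) + 1 + k : ℕ) + 1 : ℝ) * h)
        = xL + (((i : ℕ) : ℝ) + 1) * h := by
      intro i k hk1 hk2
      have e1 : (((i : ℕ) - 1 - k : ℕ) : ℝ) = ((i : ℕ) : ℝ) - 1 - (k : ℝ) := by
        have hn : (i : ℕ) - 1 - k + (k + 1) = (i : ℕ) := by omega
        have := congrArg (fun t : ℕ => (t : ℝ)) hn
        push_cast at this
        linarith
      have e2 : (((i : ℕ) + 1 + k : ℕ) : ℝ) = ((i : ℕ) : ℝ) + 1 + (k : ℝ) := by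
        push_cast; ring
      rw [smul_eq_mul, smul_eq_mul, e1, e2]
      ring
    rcases hd with ⟨hcv, hnn⟩ | ⟨hcc, hnp⟩
    · refine ⟨dN, fun _ _ => rfl, fun j hj => hnn _ (hmem j hj), ?_⟩
      intro i k hk1 hk2
      have key := hcv.2 (hmem _ (show (i:ℕ)-1-k < M by omega))
        (hmem _ (show (i:ℕ)+1+k < M by omega))
        (by norm_num : (0:ℝ) ≤ 1/2) (by norm_num : (0:ℝ) ≤ 1/2)
        (by norm_num : (1/2 : ℝ) + 1/2 = 1)
      rw [hpt i k hk1 hk2] at key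
      simp only [smul_eq_mul] at key
      show 2 * dt (xL + (((i:ℕ) : ℝ) + 1) * h)
          ≤ dt (xL + ((((i:ℕ) - 1 - k : ℕ) : ℝ) + 1) * h)
            + dt (xL + ((((i:ℕ) + 1 + k : ℕ) : ℝ) + 1) * h)
      linarith [key]
    · refine ⟨fun j => -(dN j), fun a b => by ring, fun j hj => by
        simpa using hnp _ (hmem j hj), ?_⟩
      intro i k hk1 hk2
      have key := hcc.2 (hmem _ (show (i:ℕ)-1-k < M by omega))
        (hmem _ (show (i:ℕ)+1+k < M by omega))
        (by norm_num : (0:ℝ) ≤ 1/2) (by norm_num : (0:ℝ) ≤ 1/2)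
        (by norm_num : (1/2 : ℝ) + 1/2 = 1)
      rw [hpt i k hk1 hk2] at key
      simp only [smul_eq_mul] at key
      show 2 * -(dt (xL + (((i:ℕ) : ℝ) + 1) * h))
          ≤ -(dt (xL + ((((i:ℕ) - 1 - k : ℕ) : ℝ) + 1) * h))
            + -(dt (xL + ((((i:ℕ) + 1 + k : ℕ) : ℝ) + 1) * h))
      linarith [key]
  have hdd2 : ∀ j, j < M → dd j ^ 2 ≤ c := by
    intro j hj
    have h1 := hc2 j hj
    have h2 := hprod j j
    nlinarith [h1, h2]
  -- the PSD matrix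
  have main := quadform (fun i j : Fin M => (2 * c - dd ↑i * dd ↑j) * GN α ↑i ↑j) u
    (by
      intro i j
      show (2 * c - dd ↑i * dd ↑j) * GN α ↑i ↑j = (2 * c - dd ↑j * dd ↑i) * GN α ↑j ↑i
      rw [GNsymm]
      ring)
    (by
      intro i j hij
      show (2 * c - dd ↑i * dd ↑j) * GN α ↑i ↑j ≤ 0
      have hne : (i : ℕ) ≠ (j : ℕ) := fun hc => hij (Fin.ext hc)
      have hG := GNoff hα1 hα2 _ _ hne
      have hb1 := hdd2 i i.2
      have hb2 := hdd2 j j.2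
      have : 0 ≤ 2 * c - dd ↑i * dd ↑j := by nlinarith [sq_nonneg (dd ↑i - dd ↑j)]
      exact mul_nonpos_of_nonneg_of_nonpos this hG)
    (fun i => rowsum hα1 hα2 i c dd hc0 hdd0 hdd2 (hmid i))
  have main' : 0 ≤ ∑ i : Fin M, ∑ j : Fin M,
      ((2 * c - dd ↑i * dd ↑j) * GN α ↑i ↑j) * (u i * u j) := main
  -- expand the quadratic forms
  have expand : ∀ A : Matrix (Fin M) (Fin M) ℝ,
      u ⬝ᵥ (A *ᵥ u) = ∑ i, ∑ j, A i j * (u i * u j) := by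
    intro A
    simp only [dotProduct, Matrix.mulVec, Finset.mul_sum]
    apply Finset.sum_congr rfl
    intro i _
    apply Finset.sum_congr rfl
    intro j _
    ring
  have hGent : ∀ i j : Fin M, G i j = GN α ↑i ↑j := fun i j => Gent α M i j
  have hent : ∀ i j : Fin M, (Dt * G * Dt) i j = dN ↑i * GN α ↑i ↑j * dN ↑j := by
    intro i j
    have e0 : (Dt * G * Dt) i j = (Dt * G) i j * dt (X j) := Matrix.mul_diagonal _ _ _ _
    have e1 : (Dt * G) i j = dt (X i) * G i j := Matrix.diagonal_mul _ _ _ _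
    rw [e0, e1, hGent i j]
  rw [expand, expand]
  have e1 : (∑ i : Fin M, ∑ j : Fin M, (Dt * G * Dt) i j * (u i * u j))
      = ∑ i : Fin M, ∑ j : Fin M, (dN ↑i * GN α ↑i ↑j * dN ↑j) * (u i * u j) := by
    apply Finset.sum_congr rfl
    intro i _
    apply Finset.sum_congr rfl
    intro j _
    rw [hent]
  have e2 : (∑ i : Fin M, ∑ j : Fin M, G i j * (u i * u j)) = ∑ i : Fin M, ∑ j : Fin M, GN α ↑i ↑j * (u i * u j) := by
    apply Finset.sum_congr rfl
    intro i _
    apply Finset.sum_congr rfl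
    intro j _
    rw [hGent]
  rw [e1, e2]
  have heq : (∑ i : Fin M, ∑ j : Fin M, ((2 * c - dd ↑i * dd ↑j) * GN α ↑i ↑j) * (u i * u j))
      = 2 * c * (∑ i : Fin M, ∑ j : Fin M, GN α ↑i ↑j * (u i * u j))
        - ∑ i : Fin M, ∑ j : Fin M, (dN ↑i * GN α ↑i ↑j * dN ↑j) * (u i * u j) := by
    have hterm : ∀ i j : Fin M,
        ((2 * c - dd ↑i * dd ↑j) * GN α ↑i ↑j) * (u i * u j)
        = 2 * c * (GN α ↑i ↑j * (u i * u j))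
          - (dN ↑i * GN α ↑i ↑j * dN ↑j) * (u i * u j) := by
      intro i j
      have hp := hprod (i : ℕ) (j : ℕ)
      linear_combination (GN α ↑i ↑j * (u i * u j)) * hp
    simp only [hterm, Finset.sum_sub_distrib, Finset.mul_sum]
  linarith [main', heq.symm.le, heq.le]
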